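/- Let 0 → U →ι V →p W → 0 be a short exact sequence of vector spaces over a field, equipped with endomorphisms D_U, D_V, D_W satisfying ι ∘ D_U = D_V ∘ ι and p ∘ D_V = D_W ∘ p, and suppose D_V^N = 0 for some integer N ≥ 2 (hence also D_U^N = 0 and D_W^N = 0). For 1 ≤ i ≤ N−1 and X ∈ {U,V,W}, set H^i_N(X) := ker(D_X^i)/range(D_X^{N−i}), and let ι_* and p_* denote the maps induced by ι and p. Then for each 1 ≤ i ≤ N−1 there exist linear connecting maps ∂ : H^i_N(W) → H^{N−i}_N(U) and ∂' : H^{N−i}_N(W) → H^i_N(U) such that the six-term sequence H^i_N(U) →ι_* H^i_N(V) →p_* H^i_N(W) →∂ H^{N−i}_N(U) →ι_* H^{N−i}_N(V) →p_* H^{N−i}_N(W) →∂' H^i_N(U) is exact at all six places. (The six-term exact sequence for N-differentials constructed in Section 5, following Dubois-Violette.) -/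

import Mathlib

open LinearMap Module

set_option maxHeartbeats 1000000

section

variable {𝕜 : Type*} [Field 𝕜] {U V : Type*}
  [AddCommGroup U] [Module 𝕜 U] [AddCommGroup V] [Module 𝕜 V]

/-- An intertwiner of endomorphisms intertwines all their powers. -/
theorem comp_pow_eq_pow_comp (f : U →ₗ[𝕜] V) {DU : Module.End 𝕜 U} {DV : Module.End 𝕜 V}
    (hf : f ∘ₗ DU = DV ∘ₗ f) (n : ℕ) : f ∘ₗ (DU ^ n) = (DV ^ n) ∘ₗ f := by
  induction n with
  | zero => ext x; simp
  | succ n ih =>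
    ext x
    have h1 := DFunLike.congr_fun ih (DU x)
    have h2 := DFunLike.congr_fun hf x
    simp only [LinearMap.comp_apply, pow_succ, Module.End.mul_apply] at h1 h2 ⊢
    rw [h1, h2]

/-- An intertwiner maps `ker DU^n` into `ker DV^n`. -/
theorem intertwiner_map_ker (f : U →ₗ[𝕜] V) {DU : Module.End 𝕜 U} {DV : Module.End 𝕜 V}
    (hf : f ∘ₗ DU = DV ∘ₗ f) (n : ℕ) : ∀ x ∈ ker (DU ^ n), f x ∈ ker (DV ^ n) := by
  intro x hx
  simp only [LinearMap.mem_ker] at hx ⊢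
  have := DFunLike.congr_fun (comp_pow_eq_pow_comp f hf n) x
  simp only [LinearMap.comp_apply] at this
  rw [← this, hx, map_zero]

/-- An intertwiner maps `range DU^n` into `range DV^n`. -/
theorem intertwiner_map_range (f : U →ₗ[𝕜] V) {DU : Module.End 𝕜 U} {DV : Module.End 𝕜 V}
    (hf : f ∘ₗ DU = DV ∘ₗ f) (n : ℕ) : ∀ x ∈ range (DU ^ n), f x ∈ range (DV ^ n) := by
  rintro x ⟨y, rfl⟩
  have := DFunLike.congr_fun (comp_pow_eq_pow_comp f hf n) y
  simp only [LinearMap.comp_apply] at this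
  exact ⟨f y, this.symm⟩

/-- The cohomology `H^i_N(V, D) = ker D^i / range D^{N−i}` of the `N`-differential `D`. -/
abbrev differentialCohomology (D : Module.End 𝕜 V) (N i : ℕ) :=
  ↥(ker (D ^ i)) ⧸ Submodule.comap (ker (D ^ i)).subtype (range (D ^ (N - i)))

/-- The map `H^i_N(U, DU) → H^i_N(V, DV)` induced by an intertwiner `f`. -/
noncomputable def inducedCohomologyMap (f : U →ₗ[𝕜] V) {DU : Module.End 𝕜 U}
    {DV : Module.End 𝕜 V} (hf : f ∘ₗ DU = DV ∘ₗ f) (N i : ℕ) :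
    differentialCohomology DU N i →ₗ[𝕜] differentialCohomology DV N i :=
  Submodule.mapQ _ _ (f.restrict (intertwiner_map_ker f hf i)) (by
    intro x hx
    simp only [Submodule.mem_comap, LinearMap.restrict_apply, Submodule.coe_subtype] at hx ⊢
    exact intertwiner_map_range f hf (N - i) _ hx)

end


section SixTermAux

variable {𝕜 U V W : Type*} [Field 𝕜]
  [AddCommGroup U] [Module 𝕜 U] [AddCommGroup V] [Module 𝕜 V] [AddCommGroup W] [Module 𝕜 W]

theorem sixterm_aux (ι : U →ₗ[𝕜] V) (p : V →ₗ[𝕜] W)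
    (hinj : Function.Injective ι) (hsurj : Function.Surjective p)
    (hexact : range ι = ker p)
    (DU : Module.End 𝕜 U) (DV : Module.End 𝕜 V) (DW : Module.End 𝕜 W)
    (hιD : ι ∘ₗ DU = DV ∘ₗ ι) (hpD : p ∘ₗ DV = DW ∘ₗ p)
    (N : ℕ) (hDV : DV ^ N = 0)
    (i j : ℕ) (hij : i + j = N) :
    ∃ d : differentialCohomology DW N i →ₗ[𝕜] differentialCohomology DU N j,
      range (inducedCohomologyMap ι hιD N i) = ker (inducedCohomologyMap p hpD N i) ∧
      range (inducedCohomologyMap p hpD N i) = ker d ∧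
      range d = ker (inducedCohomologyMap ι hιD N j) := by
  classical
  have hNi : N - i = j := by omega
  have hNj : N - j = i := by omega
  -- pointwise intertwining of powers
  have hιp : ∀ (n : ℕ) (x : U), ι ((DU ^ n) x) = (DV ^ n) (ι x) := fun n x => by
    simpa using DFunLike.congr_fun (comp_pow_eq_pow_comp ι hιD n) x
  have hpp : ∀ (n : ℕ) (x : V), p ((DV ^ n) x) = (DW ^ n) (p x) := fun n x => by
    simpa using DFunLike.congr_fun (comp_pow_eq_pow_comp p hpD n) x
  have hij_pow : ∀ v : V, (DV ^ i) ((DV ^ j) v) = 0 := by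
    intro v
    have h : DV ^ i * DV ^ j = 0 := by rw [← pow_add, hij, hDV]
    simpa [Module.End.mul_apply] using DFunLike.congr_fun h v
  have hji_pow : ∀ v : V, (DV ^ j) ((DV ^ i) v) = 0 := by
    intro v
    have h : DV ^ j * DV ^ i = 0 := by rw [← pow_add, Nat.add_comm, hij, hDV]
    simpa [Module.End.mul_apply] using DFunLike.congr_fun h v
  -- the submodule of admissible lifts
  set M : Submodule 𝕜 V := ker ((DW ^ i) ∘ₗ p) with hM
  have hMmem : ∀ v : V, v ∈ M ↔ (DW ^ i) (p v) = 0 := fun v => by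
    simp [hM, LinearMap.mem_ker]
  have hDViM : ∀ v : M, ((DV ^ i) ∘ₗ M.subtype) v ∈ range ι := by
    intro v
    rw [hexact, LinearMap.mem_ker]
    simp only [LinearMap.comp_apply, Submodule.coe_subtype]
    rw [hpp]
    exact (hMmem _).mp v.2
  set ιe : U ≃ₗ[𝕜] range ι := LinearEquiv.ofInjective ι hinj with hιe
  have hsymm : ∀ x : range ι, ι (ιe.symm x) = (x : V) := by
    intro x
    conv_rhs => rw [← ιe.apply_symm_apply x]
    rw [hιe, LinearEquiv.ofInjective_apply]
  set g : M →ₗ[𝕜] U :=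
    (ιe.symm : range ι →ₗ[𝕜] U) ∘ₗ
      LinearMap.codRestrict (range ι) ((DV ^ i) ∘ₗ M.subtype) hDViM with hgdef
  have hg : ∀ v : M, ι (g v) = (DV ^ i) (v : V) := by
    intro v
    rw [hgdef]
    simp only [LinearMap.comp_apply, LinearEquiv.coe_coe]
    rw [hsymm]
    simp
  have hgker : ∀ v : M, g v ∈ ker (DU ^ j) := by
    intro v
    rw [LinearMap.mem_ker]
    apply hinj
    rw [map_zero, hιp, hg]
    exact hji_pow _
  set h : M →ₗ[𝕜] differentialCohomology DU N j :=
    (Submodule.mkQ _) ∘ₗ LinearMap.codRestrict (ker (DU ^ j)) g hgker with hhdef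
  have hhmk : ∀ v : M, h v = Submodule.Quotient.mk ⟨g v, hgker v⟩ := fun v => rfl
  have hqmem : ∀ v : M, (p ∘ₗ M.subtype) v ∈ ker (DW ^ i) := by
    intro v
    rw [LinearMap.mem_ker]
    simp only [LinearMap.comp_apply, Submodule.coe_subtype]
    exact (hMmem _).mp v.2
  set q : M →ₗ[𝕜] differentialCohomology DW N i :=
    (Submodule.mkQ _) ∘ₗ LinearMap.codRestrict (ker (DW ^ i)) (p ∘ₗ M.subtype) hqmem with hqdef
  have hqmk : ∀ v : M, q v = Submodule.Quotient.mk ⟨p (v : V), hqmem v⟩ := fun v => rfl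
  have hqsurj : Function.Surjective q := by
    intro c
    obtain ⟨x, rfl⟩ := Submodule.Quotient.mk_surjective _ c
    obtain ⟨v, hv⟩ := hsurj (x : W)
    have hvM : v ∈ M := by
      rw [hMmem, hv]
      exact LinearMap.mem_ker.mp x.2
    refine ⟨⟨v, hvM⟩, ?_⟩
    rw [hqmk]
    exact congrArg _ (Subtype.ext hv)
  -- h vanishes on ker q
  have hzero : ∀ v : M, g v ∈ range (DU ^ (N - j)) → h v = 0 := by
    intro v hv
    rw [hhmk, Submodule.Quotient.mk_eq_zero]
    simpa [Submodule.mem_comap, Submodule.coe_subtype] using hv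
  have hkerle : ker q ≤ ker h := by
    intro v hv
    rw [LinearMap.mem_ker] at hv ⊢
    rw [hqmk, Submodule.Quotient.mk_eq_zero] at hv
    simp only [Submodule.mem_comap, Submodule.coe_subtype, hNi] at hv
    obtain ⟨w', hw'⟩ := hv
    obtain ⟨v'', rfl⟩ := hsurj w'
    have hker : (v : V) - (DV ^ j) v'' ∈ ker p := by
      rw [LinearMap.mem_ker, map_sub, hpp, hw', sub_self]
    rw [← hexact] at hker
    obtain ⟨u', hu'⟩ := hker
    apply hzero
    rw [hNj]
    refine ⟨u', hinj ?_⟩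
    rw [hιp, hg, hu', map_sub, hij_pow, sub_zero]
  -- the connecting map
  set e := LinearMap.quotKerEquivOfSurjective q hqsurj with hedef
  set d : differentialCohomology DW N i →ₗ[𝕜] differentialCohomology DU N j :=
    (Submodule.liftQ (ker q) h hkerle) ∘ₗ (e.symm : _ →ₗ[𝕜] _) with hddef
  have he : ∀ v : M, e (Submodule.Quotient.mk v) = q v := fun v => rfl
  have hdq : ∀ v : M, d (q v) = h v := by
    intro v
    have h1 : e.symm (q v) = Submodule.Quotient.mk v := by
      rw [← he, e.symm_apply_apply]
    rw [hddef]
    simp only [LinearMap.comp_apply, LinearEquiv.coe_coe, h1, Submodule.liftQ_apply]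
  refine ⟨d, ?_, ?_, ?_⟩
  · -- exactness at H^i(V)
    apply le_antisymm
    · rintro _ ⟨c, rfl⟩
      obtain ⟨x, rfl⟩ := Submodule.Quotient.mk_surjective _ c
      rw [LinearMap.mem_ker, inducedCohomologyMap, inducedCohomologyMap,
        Submodule.mapQ_apply, Submodule.mapQ_apply, Submodule.Quotient.mk_eq_zero]
      have : p (ι (x : U)) = 0 := by
        have : ι (x : U) ∈ ker p := hexact ▸ ⟨(x : U), rfl⟩
        exact LinearMap.mem_ker.mp this
      simp [Submodule.mem_comap, Submodule.coe_subtype, LinearMap.restrict_apply, this]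
    · intro c hc
      obtain ⟨x, rfl⟩ := Submodule.Quotient.mk_surjective _ c
      rw [LinearMap.mem_ker, inducedCohomologyMap, Submodule.mapQ_apply,
        Submodule.Quotient.mk_eq_zero] at hc
      simp only [Submodule.mem_comap, Submodule.coe_subtype, LinearMap.restrict_apply,
        hNi] at hc
      obtain ⟨w', hw'⟩ := hc
      obtain ⟨v'', rfl⟩ := hsurj w'
      have hker : (x : V) - (DV ^ j) v'' ∈ ker p := by
        rw [LinearMap.mem_ker, map_sub, hpp, hw', sub_self]
      rw [← hexact] at hker
      obtain ⟨u, hu⟩ := hker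
      have huker : u ∈ ker (DU ^ i) := by
        rw [LinearMap.mem_ker]
        apply hinj
        rw [map_zero, hιp, hu, map_sub, LinearMap.mem_ker.mp x.2, hij_pow, zero_sub,
          neg_eq_zero]
      refine ⟨Submodule.Quotient.mk ⟨u, huker⟩, ?_⟩
      rw [inducedCohomologyMap, Submodule.mapQ_apply, Submodule.Quotient.eq]
      simp only [Submodule.mem_comap, Submodule.coe_subtype, LinearMap.restrict_apply,
        AddSubgroupClass.coe_sub, hNi]
      refine ⟨-v'', ?_⟩
      rw [map_neg, hu]
      abel
  · -- exactness at H^i(W)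
    apply le_antisymm
    · rintro _ ⟨c, rfl⟩
      obtain ⟨x, rfl⟩ := Submodule.Quotient.mk_surjective _ c
      have hxM : (x : V) ∈ M := by
        rw [hMmem, ← hpp, LinearMap.mem_ker.mp x.2, map_zero]
      have hq' : inducedCohomologyMap p hpD N i (Submodule.Quotient.mk x) = q ⟨x, hxM⟩ := by
        rw [inducedCohomologyMap, Submodule.mapQ_apply, hqmk]
        rfl
      rw [LinearMap.mem_ker, hq', hdq]
      apply hzero
      have : g ⟨(x : V), hxM⟩ = 0 := by
        apply hinj
        rw [map_zero, hg]
        exact LinearMap.mem_ker.mp x.2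
      rw [this]
      exact Submodule.zero_mem _
    · intro c hc
      rw [LinearMap.mem_ker] at hc
      obtain ⟨v, rfl⟩ := hqsurj c
      rw [hdq] at hc
      rw [hhmk, Submodule.Quotient.mk_eq_zero] at hc
      simp only [Submodule.mem_comap, Submodule.coe_subtype, hNj] at hc
      obtain ⟨u₀, hu₀⟩ := hc
      have hvker : (v : V) - ι u₀ ∈ ker (DV ^ i) := by
        rw [LinearMap.mem_ker, map_sub, ← hιp, hu₀, hg, sub_self]
      refine ⟨Submodule.Quotient.mk ⟨(v : V) - ι u₀, hvker⟩, ?_⟩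
      rw [inducedCohomologyMap, Submodule.mapQ_apply, hqmk]
      have hp0 : p (ι u₀) = 0 := LinearMap.mem_ker.mp (hexact ▸ ⟨u₀, rfl⟩)
      refine congrArg Submodule.Quotient.mk (Subtype.ext ?_)
      show p ((v : V) - ι u₀) = p (v : V)
      rw [map_sub, hp0, sub_zero]
  · -- exactness at H^j(U)
    apply le_antisymm
    · rintro _ ⟨c, rfl⟩
      obtain ⟨v, rfl⟩ := hqsurj c
      rw [LinearMap.mem_ker, hdq, hhmk, inducedCohomologyMap, Submodule.mapQ_apply,
        Submodule.Quotient.mk_eq_zero]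
      simp only [Submodule.mem_comap, Submodule.coe_subtype, LinearMap.restrict_apply, hNj]
      refine ⟨(v : V), ?_⟩
      rw [hg]
    · intro c hc
      obtain ⟨x, rfl⟩ := Submodule.Quotient.mk_surjective _ c
      rw [LinearMap.mem_ker, inducedCohomologyMap, Submodule.mapQ_apply,
        Submodule.Quotient.mk_eq_zero] at hc
      simp only [Submodule.mem_comap, Submodule.coe_subtype, LinearMap.restrict_apply,
        hNj] at hc
      obtain ⟨v, hv⟩ := hc
      have hvM : v ∈ M := by
        rw [hMmem, ← hpp, hv]
        exact LinearMap.mem_ker.mp (hexact ▸ ⟨(x : U), rfl⟩)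
      refine ⟨q ⟨v, hvM⟩, ?_⟩
      rw [hdq, hhmk]
      refine congrArg Submodule.Quotient.mk (Subtype.ext ?_)
      show g ⟨v, hvM⟩ = (x : U)
      apply hinj
      rw [hg, hv]

end SixTermAux

/-- six-term exact sequence for `N`-differentials, following
Dubois-Violette. For a short exact sequence `0 → U → V → W → 0` with compatible
endomorphisms and `D_V^N = 0` (`N ≥ 2`), for each `1 ≤ i ≤ N−1` there are connecting
maps `∂ : H^i_N(W) → H^{N−i}_N(U)` and `∂' : H^{N−i}_N(W) → H^i_N(U)` making the
six-term sequence
`H^i_N(U) → H^i_N(V) → H^i_N(W) → H^{N−i}_N(U) → H^{N−i}_N(V) → H^{N−i}_N(W) → H^i_N(U)`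
exact at all six places. -/
theorem stmt17 {𝕜 U V W : Type*} [Field 𝕜]
    [AddCommGroup U] [Module 𝕜 U] [AddCommGroup V] [Module 𝕜 V] [AddCommGroup W] [Module 𝕜 W]
    (ι : U →ₗ[𝕜] V) (p : V →ₗ[𝕜] W)
    (hinj : Function.Injective ι) (hsurj : Function.Surjective p)
    (hexact : range ι = ker p)
    (DU : Module.End 𝕜 U) (DV : Module.End 𝕜 V) (DW : Module.End 𝕜 W)
    (hιD : ι ∘ₗ DU = DV ∘ₗ ι) (hpD : p ∘ₗ DV = DW ∘ₗ p)
    (N : ℕ) (hN : 2 ≤ N) (hDV : DV ^ N = 0)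
    (i : ℕ) (hi1 : 1 ≤ i) (hi2 : i ≤ N - 1) :
    ∃ (d : differentialCohomology DW N i →ₗ[𝕜] differentialCohomology DU N (N - i))
      (d' : differentialCohomology DW N (N - i) →ₗ[𝕜] differentialCohomology DU N i),
      range (inducedCohomologyMap ι hιD N i) = ker (inducedCohomologyMap p hpD N i) ∧
      range (inducedCohomologyMap p hpD N i) = ker d ∧
      range d = ker (inducedCohomologyMap ι hιD N (N - i)) ∧
      range (inducedCohomologyMap ι hιD N (N - i)) =
        ker (inducedCohomologyMap p hpD N (N - i)) ∧
      range (inducedCohomologyMap p hpD N (N - i)) = ker d' ∧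
      range d' = ker (inducedCohomologyMap ι hιD N i) := by
  obtain ⟨d, h1, h2, h3⟩ := sixterm_aux ι p hinj hsurj hexact DU DV DW hιD hpD N hDV
    i (N - i) (by omega)
  obtain ⟨d', h4, h5, h6⟩ := sixterm_aux ι p hinj hsurj hexact DU DV DW hιD hpD N hDV
    (N - i) i (by omega)
  exact ⟨d, d', h1, h2, h3, h4, h5, h6⟩
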